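/- Let (X_u)_{u∈T} be a bifurcating Markov chain on S with kernel 𝒫 started at x, and 𝒬 = (P₀+P₁)/2. For every bounded measurable f and n ≥ 0: E_x[(∑_{u∈G_n} f(X_u))²] = 2ⁿ 𝒬ⁿ(f²)(x) + ∑_{k=0}^{n−1} 2^{n+k} 𝒬^{n−k−1}(𝒫(𝒬^k f ⊗ 𝒬^k f))(x), where (g ⊗ h)(y,z) = g(y)h(z) and 𝒫(F)(x) = ∫ F(y,z) 𝒫(x, dy, dz) for F on S². -/

import Mathlib

open MeasureTheory ProbabilityTheory

/-- Expected sum of `f` over generation `n` of a bifurcating Markov chain with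
reproduction kernel `κ`, started at `x` (branching Markov property recursion). -/
noncomputable def genSum {S : Type*} [MeasurableSpace S] (κ : Kernel S (S × S))
    (f : S → ℝ) : ℕ → S → ℝ
  | 0 => f
  | n + 1 => fun x => ∫ p : S × S, (genSum κ f n p.1 + genSum κ f n p.2) ∂(κ x)

/-- Expected squared sum `E_x[(∑_{u ∈ 𝔾_n} f(X_u))²]`, defined by the recursion coming from
the branching Markov property (daughters' subtrees are conditionally independent). -/
noncomputable def genSq {S : Type*} [MeasurableSpace S] (κ : Kernel S (S × S))
    (f : S → ℝ) : ℕ → S → ℝ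
  | 0 => fun x => f x ^ 2
  | n + 1 => fun x => ∫ p : S × S,
      (genSq κ f n p.1 + genSq κ f n p.2 + 2 * genSum κ f n p.1 * genSum κ f n p.2) ∂(κ x)

/-- The mean transition operator `𝒬 g = (P₀ g + P₁ g)/2`. -/
noncomputable def meanOp {S : Type*} [MeasurableSpace S] (κ : Kernel S (S × S))
    (g : S → ℝ) : S → ℝ :=
  fun x => ∫ p : S × S, (g p.1 + g p.2) / 2 ∂(κ x)

/-- The operator `𝒫 F (x) = ∫ F(y,z) 𝒫(x, dy, dz)` applied to a tensor product. -/
noncomputable def prodOp {S : Type*} [MeasurableSpace S] (κ : Kernel S (S × S))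
    (g h : S → ℝ) : S → ℝ :=
  fun x => ∫ p : S × S, g p.1 * h p.2 ∂(κ x)

section Aux
variable {S : Type*} [MeasurableSpace S] (κ : Kernel S (S × S)) [IsMarkovKernel κ]

/-- Measurable and bounded. -/
def MB (g : S → ℝ) : Prop := Measurable g ∧ ∃ C, ∀ x, |g x| ≤ C

variable {κ}

lemma measurable_kint {F : S × S → ℝ} (hF : Measurable F) :
    Measurable fun x => ∫ p, F p ∂(κ x) := by
  have h : StronglyMeasurable fun q : S × (S × S) => F q.2 :=
    (hF.comp measurable_snd).stronglyMeasurable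
  exact (h.integral_kernel_prod_right' (κ := κ)).measurable

lemma abs_kint_le {F : S × S → ℝ} {C : ℝ} (hC : ∀ p, |F p| ≤ C) (x : S) :
    |∫ p, F p ∂(κ x)| ≤ C := by
  have := norm_integral_le_of_norm_le_const (μ := κ x) (f := F) (C := C)
    (ae_of_all _ fun p => by simpa [Real.norm_eq_abs] using hC p)
  simpa [Real.norm_eq_abs] using this

lemma integrable_fst {g : S → ℝ} (hg : MB g) (x : S) :
    Integrable (fun p : S × S => g p.1) (κ x) := by
  obtain ⟨hm, C, hC⟩ := hg
  exact ⟨(hm.comp measurable_fst).aestronglyMeasurable,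
    HasFiniteIntegral.of_bounded (C := C)
      (ae_of_all _ fun p => by simpa [Real.norm_eq_abs] using hC p.1)⟩

lemma integrable_snd {g : S → ℝ} (hg : MB g) (x : S) :
    Integrable (fun p : S × S => g p.2) (κ x) := by
  obtain ⟨hm, C, hC⟩ := hg
  exact ⟨(hm.comp measurable_snd).aestronglyMeasurable,
    HasFiniteIntegral.of_bounded (C := C)
      (ae_of_all _ fun p => by simpa [Real.norm_eq_abs] using hC p.2)⟩

lemma integrable_pair {g h : S → ℝ} (hg : MB g) (hh : MB h) (x : S) :
    Integrable (fun p : S × S => (g p.1 + h p.2) / 2) (κ x) :=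
  (((integrable_fst hg x).add (integrable_snd hh x)).div_const 2)

lemma MB.meanOp {g : S → ℝ} (hg : MB g) : MB (meanOp κ g) := by
  obtain ⟨hm, C, hC⟩ := hg
  refine ⟨measurable_kint (((hm.comp measurable_fst).add (hm.comp measurable_snd)).div_const 2),
    ⟨C, fun x => ?_⟩⟩
  refine abs_kint_le (fun p => ?_) x
  have h1 := (abs_add_le (g p.1) (g p.2)).trans (add_le_add (hC p.1) (hC p.2))
  have h2 : |(g p.1 + g p.2) / 2| = |g p.1 + g p.2| / 2 := by rw [abs_div, abs_two]
  linarith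

lemma MB.iterate {g : S → ℝ} (hg : MB g) (n : ℕ) : MB ((_root_.meanOp κ)^[n] g) := by
  induction n with
  | zero => simpa using hg
  | succ n ih => rw [Function.iterate_succ_apply']; exact ih.meanOp

lemma MB.prodOp {g h : S → ℝ} (hg : MB g) (hh : MB h) : MB (_root_.prodOp κ g h) := by
  obtain ⟨hgm, Cg, hCg⟩ := hg
  obtain ⟨hhm, Ch, hCh⟩ := hh
  refine ⟨measurable_kint ((hgm.comp measurable_fst).mul (hhm.comp measurable_snd)),
    ⟨Cg * Ch, fun x => ?_⟩⟩
  refine abs_kint_le (fun p => ?_) x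
  rw [abs_mul]
  exact mul_le_mul (hCg p.1) (hCh p.2) (abs_nonneg _) ((abs_nonneg _).trans (hCg p.1))

lemma meanOp_const_mul (c : ℝ) (g : S → ℝ) :
    meanOp κ (fun y => c * g y) = fun x => c * meanOp κ g x := by
  funext x
  simp only [meanOp]
  rw [← MeasureTheory.integral_const_mul]
  congr 1 with p
  ring

lemma meanOp_add {g h : S → ℝ} (hg : MB g) (hh : MB h) :
    meanOp κ (fun y => g y + h y) = fun x => meanOp κ g x + meanOp κ h x := by
  funext x
  simp only [meanOp]
  have : ∀ p : S × S, (g p.1 + h p.1 + (g p.2 + h p.2)) / 2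
      = (g p.1 + g p.2) / 2 + (h p.1 + h p.2) / 2 := fun p => by ring
  rw [integral_congr_ae (ae_of_all _ this),
    integral_add (integrable_pair hg hg x) (integrable_pair hh hh x)]

lemma MB.add {g h : S → ℝ} (hg : MB g) (hh : MB h) :
    MB (fun y => g y + h y) := by
  obtain ⟨hgm, Cg, hCg⟩ := hg
  obtain ⟨hhm, Ch, hCh⟩ := hh
  exact ⟨hgm.add hhm, Cg + Ch, fun x =>
    (abs_add_le _ _).trans (add_le_add (hCg x) (hCh x))⟩

lemma MB.const_mul {g : S → ℝ} (hg : MB g) (c : ℝ) :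
    MB (fun y => c * g y) := by
  obtain ⟨hgm, Cg, hCg⟩ := hg
  exact ⟨(measurable_const (a := c)).mul hgm, |c| * Cg, fun x => by
    rw [abs_mul]; exact mul_le_mul_of_nonneg_left (hCg x) (abs_nonneg c)⟩

lemma MB.finsum {ι : Type*} (s : Finset ι) (g : ι → S → ℝ)
    (hg : ∀ i ∈ s, MB (g i)) : MB (fun y => ∑ i ∈ s, g i y) := by
  classical
  induction s using Finset.induction with
  | empty => exact ⟨measurable_const, 0, fun x => by simp⟩
  | insert a s hni ih =>
      simp only [Finset.sum_insert hni]
      exact (hg a (Finset.mem_insert_self _ _)).add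
        (ih fun i hi => hg i (Finset.mem_insert_of_mem hi))

lemma meanOp_sum {ι : Type*} (s : Finset ι) (g : ι → S → ℝ)
    (hg : ∀ i ∈ s, MB (g i)) :
    meanOp κ (fun y => ∑ i ∈ s, g i y) = fun x => ∑ i ∈ s, meanOp κ (g i) x := by
  classical
  induction s using Finset.induction with
  | empty =>
      funext x
      simp [meanOp]
  | insert a s hni ih =>
      simp only [Finset.sum_insert hni]
      rw [meanOp_add (hg a (Finset.mem_insert_self _ _))
        (MB.finsum s g fun i hi => hg i (Finset.mem_insert_of_mem hi)),
        ih fun i hi => hg i (Finset.mem_insert_of_mem hi)]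

lemma integrable_mul {g h : S → ℝ} (hg : MB g) (hh : MB h) (x : S) :
    Integrable (fun p : S × S => g p.1 * h p.2) (κ x) := by
  obtain ⟨hgm, Cg, hCg⟩ := hg
  obtain ⟨hhm, Ch, hCh⟩ := hh
  refine ⟨((hgm.comp measurable_fst).mul (hhm.comp measurable_snd)).aestronglyMeasurable,
    HasFiniteIntegral.of_bounded (C := Cg * Ch) (ae_of_all _ fun p => ?_)⟩
  rw [Real.norm_eq_abs, abs_mul]
  exact mul_le_mul (hCg p.1) (hCh p.2) (abs_nonneg _) ((abs_nonneg _).trans (hCg p.1))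

lemma genSum_eq {f : S → ℝ} (hf : MB f) (n : ℕ) :
    genSum κ f n = fun x => 2 ^ n * (meanOp κ)^[n] f x := by
  induction n with
  | zero => funext x; simp [genSum]
  | succ n ih =>
      funext x
      have h1 : ∀ p : S × S, genSum κ f n p.1 + genSum κ f n p.2
          = 2 ^ (n + 1) * (((meanOp κ)^[n] f p.1 + (meanOp κ)^[n] f p.2) / 2) := by
        intro p; rw [ih]; ring
      simp only [genSum]
      rw [integral_congr_ae (ae_of_all _ h1), MeasureTheory.integral_const_mul,
        Function.iterate_succ_apply']
      rfl

lemma MB_genSum {f : S → ℝ} (hf : MB f) (n : ℕ) : MB (genSum κ f n) := by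
  rw [genSum_eq hf]
  exact (hf.iterate n).const_mul (2 ^ n)

lemma MB_genSq {f : S → ℝ} (hf : MB f) (n : ℕ) : MB (genSq κ f n) := by
  induction n with
  | zero =>
      obtain ⟨hm, Cf, hC⟩ := hf
      refine ⟨?_, Cf ^ 2, fun x => ?_⟩ <;> simp only [genSq]
      · exact hm.pow_const 2
      · rw [abs_pow]; exact pow_le_pow_left₀ (abs_nonneg _) (hC x) 2
  | succ n ih =>
      obtain ⟨hqm, Cq, hCq⟩ := ih
      obtain ⟨hsm, Cs, hCs⟩ := MB_genSum (κ := κ) hf n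
      simp only [genSq]
      refine ⟨measurable_kint (((hqm.comp measurable_fst).add (hqm.comp measurable_snd)).add
        ((measurable_const.mul (hsm.comp measurable_fst)).mul (hsm.comp measurable_snd))),
        Cq + Cq + 2 * (Cs * Cs), fun x => abs_kint_le (fun p => ?_) x⟩
      have h1 := hCq p.1
      have h2 := hCq p.2
      have h3 := hCs p.1
      have h4 := hCs p.2
      have hCs0 : (0 : ℝ) ≤ Cs := (abs_nonneg _).trans h3
      have h5 : |2 * genSum κ f n p.1 * genSum κ f n p.2| ≤ 2 * (Cs * Cs) := by
        rw [abs_mul, abs_mul, abs_two, mul_assoc]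
        exact mul_le_mul_of_nonneg_left
          (mul_le_mul h3 h4 (abs_nonneg _) hCs0) (by norm_num)
      have h6 := abs_add_le (genSq κ f n p.1 + genSq κ f n p.2)
        (2 * genSum κ f n p.1 * genSum κ f n p.2)
      have h7 := abs_add_le (genSq κ f n p.1) (genSq κ f n p.2)
      linarith

end Aux

/-- Second moment formula for bifurcating Markov chains:
`E_x[(∑_{u ∈ 𝔾_n} f(X_u))²] = 2ⁿ 𝒬ⁿ(f²)(x)
  + ∑_{k=0}^{n−1} 2^{n+k} 𝒬^{n−k−1}(𝒫(𝒬^k f ⊗ 𝒬^k f))(x)`. -/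
theorem bmc_second_moment {S : Type*} [MeasurableSpace S]
    (κ : Kernel S (S × S)) [IsMarkovKernel κ]
    (f : S → ℝ) (hf : Measurable f) (C : ℝ) (hfbd : ∀ x, |f x| ≤ C) :
    ∀ (n : ℕ) (x : S),
      genSq κ f n x
        = 2 ^ n * ((meanOp κ)^[n] (fun y => f y ^ 2)) x
          + ∑ k ∈ Finset.range n, 2 ^ (n + k) *
              ((meanOp κ)^[n - k - 1]
                (prodOp κ ((meanOp κ)^[k] f) ((meanOp κ)^[k] f))) x := by
  have hMB : MB f := ⟨hf, C, hfbd⟩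
  have hf2 : MB (fun y => f y ^ 2) :=
    ⟨hf.pow_const 2, C ^ 2, fun x => by
      rw [abs_pow]; exact pow_le_pow_left₀ (abs_nonneg _) (hfbd x) 2⟩
  have hPk : ∀ k : ℕ, MB (prodOp κ ((meanOp κ)^[k] f) ((meanOp κ)^[k] f)) :=
    fun k => (hMB.iterate k).prodOp (hMB.iterate k)
  intro n
  induction n with
  | zero => intro x; simp [genSq]
  | succ n ih =>
      intro x
      -- Step 1: unfold genSq (n+1)
      have key : genSq κ f (n + 1) x
          = 2 * meanOp κ (genSq κ f n) x
            + 2 * (2 ^ n * 2 ^ n) *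
              prodOp κ ((meanOp κ)^[n] f) ((meanOp κ)^[n] f) x := by
        simp only [genSq]
        have hiA : Integrable (fun p : S × S =>
            genSq κ f n p.1 + genSq κ f n p.2) (κ x) :=
          (integrable_fst (MB_genSq (κ := κ) hMB n) x).add (integrable_snd (MB_genSq (κ := κ) hMB n) x)
        have hiB : Integrable (fun p : S × S =>
            2 * genSum κ f n p.1 * genSum κ f n p.2) (κ x) := by
          have := (integrable_mul (κ := κ) (MB_genSum (κ := κ) hMB n) (MB_genSum (κ := κ) hMB n) x).const_mul 2
          simpa [mul_assoc] using this
        rw [integral_add hiA hiB]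
        congr 1
        · have h1 : ∀ p : S × S, genSq κ f n p.1 + genSq κ f n p.2
              = 2 * ((genSq κ f n p.1 + genSq κ f n p.2) / 2) := fun p => by ring
          rw [integral_congr_ae (ae_of_all _ h1), MeasureTheory.integral_const_mul]
          rfl
        · have h2 : ∀ p : S × S, 2 * genSum κ f n p.1 * genSum κ f n p.2
              = 2 * (2 ^ n * 2 ^ n) *
                ((meanOp κ)^[n] f p.1 * (meanOp κ)^[n] f p.2) := by
            intro p; rw [genSum_eq hMB]; ring
          rw [integral_congr_ae (ae_of_all _ h2), MeasureTheory.integral_const_mul]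
          rfl
      -- Step 2: compute meanOp of genSq n using ih
      have hgsq_eq : genSq κ f n = fun y =>
          2 ^ n * ((meanOp κ)^[n] (fun y => f y ^ 2)) y
            + ∑ k ∈ Finset.range n, 2 ^ (n + k) *
              ((meanOp κ)^[n - k - 1]
                (prodOp κ ((meanOp κ)^[k] f) ((meanOp κ)^[k] f))) y :=
        funext fun y => ih y
      have hMB1 : MB (fun y => 2 ^ n * ((meanOp κ)^[n] (fun y => f y ^ 2)) y) :=
        (hf2.iterate n).const_mul _
      have hMB2 : ∀ k ∈ Finset.range n, MB (fun y => 2 ^ (n + k) *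
          ((meanOp κ)^[n - k - 1]
            (prodOp κ ((meanOp κ)^[k] f) ((meanOp κ)^[k] f))) y) :=
        fun k _ => ((hPk k).iterate _).const_mul _
      have e1 : meanOp κ (genSq κ f n) x
          = 2 ^ n * ((meanOp κ)^[n + 1] (fun y => f y ^ 2)) x
            + ∑ k ∈ Finset.range n, 2 ^ (n + k) *
              ((meanOp κ)^[(n - k - 1) + 1]
                (prodOp κ ((meanOp κ)^[k] f) ((meanOp κ)^[k] f))) x := by
        rw [hgsq_eq, meanOp_add hMB1 (MB.finsum _ _ hMB2)]
        simp only [meanOp_const_mul, meanOp_sum _ _ hMB2, Function.iterate_succ_apply']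
      rw [key, e1, Finset.sum_range_succ]
      have hsub : ∀ k ∈ Finset.range n, (n - k - 1) + 1 = n + 1 - k - 1 := by
        intro k hk
        have := Finset.mem_range.mp hk
        omega
      have hsum : ∀ k ∈ Finset.range n,
          2 * (2 ^ (n + k) * ((meanOp κ)^[(n - k - 1) + 1]
              (prodOp κ ((meanOp κ)^[k] f) ((meanOp κ)^[k] f))) x)
            = 2 ^ (n + 1 + k) * ((meanOp κ)^[n + 1 - k - 1]
              (prodOp κ ((meanOp κ)^[k] f) ((meanOp κ)^[k] f))) x := by
        intro k hk
        rw [hsub k hk]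
        ring
      have hn0 : n + 1 - n - 1 = 0 := by omega
      rw [hn0]
      rw [mul_add, Finset.mul_sum, Finset.sum_congr rfl hsum]
      simp only [Function.iterate_zero, id_eq]
      ring
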